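/- Let φ be a quadratic form over a field F of characteristic 2, let f ∈ F[X₁,…,X_l] be an irreducible polynomial, and suppose there exists a ∈ F^* such that af lies in the multiplicative subgroup ⟨D_{F(X₁,…,X_l)}^*(φ)⟩ of F(X₁,…,X_l)^* generated by the nonzero values represented by φ over the rational function field F(X₁,…,X_l). Then φ_{F(f)} is isotropic. -/

import Mathlib

/-!
Background definitions for quadratic forms over fields of characteristic 2,
following the conventions of "Isotropy of quadratic forms over function fields
in characteristic 2".  A quadratic form of dimension `n` over a commutative ring
`R` is represented by a coefficient matrix `c : ι → ι → R` (`ι` a finite index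
type), the associated quadratic map being `x ↦ ∑ i j, c i j * x i * x j`; every
quadratic form on a finite-dimensional vector space (a map satisfying
`φ(av) = a²φ(v)` whose polar form is bilinear) arises this way.
-/

open scoped BigOperators Pointwise Classical

namespace QF2

variable {R S : Type*} [CommRing R] [CommRing S] {ι κ : Type} [Fintype ι] [Fintype κ]

/-- The value at `x` of the quadratic form with coefficient matrix `c`, namely
`∑ i j, c i j * x i * x j`. -/
def eval (c : ι → ι → R) (x : ι → R) : R := ∑ i, ∑ j, c i j * x i * x j

/-- The polar form `b(x,y) = q(x+y) - q(x) - q(y)` of the quadratic form `c`. -/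
def polar (c : ι → ι → R) (x y : ι → R) : R := ∑ i, ∑ j, c i j * (x i * y j + x j * y i)

/-- A quadratic form is isotropic if it vanishes on a nonzero vector. -/
def IsIsotropic (c : ι → ι → R) : Prop := ∃ x : ι → R, x ≠ 0 ∧ eval c x = 0

/-- Anisotropic: not isotropic. -/
abbrev IsAnisotropic (c : ι → ι → R) : Prop := ¬ IsIsotropic c

/-- Base change of a quadratic form along a ring homomorphism. -/
def map (σ : R →+* S) (c : ι → ι → R) : ι → ι → S := fun i j => σ (c i j)

/-- Quasilinear (totally singular): the polar form vanishes identically. -/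
def IsQuasilinear (c : ι → ι → R) : Prop := ∀ x y : ι → R, polar c x y = 0

/-- Nondefective (quasilinear index `i_d = 0`): no nonzero vector of the radical of the
polar form is isotropic. -/
def IsNondefective (c : ι → ι → R) : Prop :=
  ∀ x : ι → R, (∀ y, polar c x y = 0) → eval c x = 0 → x = 0

/-- `d` is isometric to `c`. -/
def Isometric (c : ι → ι → R) (d : κ → κ → R) : Prop :=
  ∃ g : (κ → R) ≃ₗ[R] (ι → R), ∀ x, eval d x = eval c (g x)

/-- `D_R^*(c)`: the set of nonzero represented elements. -/
def reps (c : ι → ι → R) : Set R := {a | a ≠ 0 ∧ ∃ x : ι → R, eval c x = a}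

/-- `D_R^*(c)^m`: products of `m` nonzero represented elements. -/
def repsPow (c : ι → ι → R) (m : ℕ) : Set R :=
  {a | ∃ v : Fin m → R, (∀ k, v k ∈ reps c) ∧ a = ∏ k, v k}

/-- The multiplicative subgroup of `F^*` generated by a set `s` of nonzero elements,
realized as a subset of `F` (products of elements of `s` and their inverses). -/
def genBy {F : Type*} [Field F] (s : Set F) : Set F :=
  ↑(Submonoid.closure (s ∪ Inv.inv '' s))

/-- `⟨D_F^*(c)⟩`: the subgroup generated by the nonzero represented elements. -/
def genGroup {F : Type*} [Field F] (c : ι → ι → F) : Set F := genBy (reps c)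

/-- `⟨D_F^*(c)²⟩`. -/
def genGroup2 {F : Type*} [Field F] (c : ι → ι → F) : Set F := genBy (repsPow c 2)

/-- The scaled quadratic form `a·c`. -/
def smulQF (a : R) (c : ι → ι → R) : ι → ι → R := fun i j => a * c i j

/-- Orthogonal sum of two quadratic forms. -/
def orthSum (c : ι → ι → R) (d : κ → κ → R) : (ι ⊕ κ) → (ι ⊕ κ) → R
  | Sum.inl i, Sum.inl j => c i j
  | Sum.inr i, Sum.inr j => d i j
  | _, _ => 0

lemma eval_add (c : ι → ι → R) (x y : ι → R) :
    eval c (x + y) = eval c x + eval c y + polar c x y := by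
  unfold eval polar
  rw [← Finset.sum_add_distrib, ← Finset.sum_add_distrib]
  refine Finset.sum_congr rfl fun i _ => ?_
  rw [← Finset.sum_add_distrib, ← Finset.sum_add_distrib]
  refine Finset.sum_congr rfl fun j _ => ?_
  simp only [Pi.add_apply]; ring

lemma polar_add_left (c : ι → ι → R) (x x' y : ι → R) :
    polar c (x + x') y = polar c x y + polar c x' y := by
  unfold polar
  rw [← Finset.sum_add_distrib]
  refine Finset.sum_congr rfl fun i _ => ?_
  rw [← Finset.sum_add_distrib]
  refine Finset.sum_congr rfl fun j _ => ?_
  simp only [Pi.add_apply]; ring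

lemma polar_smul_left (c : ι → ι → R) (a : R) (x y : ι → R) :
    polar c (a • x) y = a * polar c x y := by
  unfold polar
  rw [Finset.mul_sum]
  refine Finset.sum_congr rfl fun i _ => ?_
  rw [Finset.mul_sum]
  refine Finset.sum_congr rfl fun j _ => ?_
  simp only [Pi.smul_apply, smul_eq_mul]; ring

lemma eval_smul (c : ι → ι → R) (a : R) (x : ι → R) :
    eval c (a • x) = a ^ 2 * eval c x := by
  unfold eval
  rw [Finset.mul_sum]
  refine Finset.sum_congr rfl fun i _ => ?_
  rw [Finset.mul_sum]
  refine Finset.sum_congr rfl fun j _ => ?_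
  simp only [Pi.smul_apply, smul_eq_mul]; ring

/-- The defect of a quadratic form: the submodule of isotropic vectors lying in the
radical of the polar form. -/
def defectSubmodule (c : ι → ι → R) : Submodule R (ι → R) where
  carrier := {x | (∀ y, polar c x y = 0) ∧ eval c x = 0}
  zero_mem' := by
    constructor
    · intro y; unfold polar; simp
    · unfold eval; simp
  add_mem' := by
    rintro x x' ⟨hx1, hx2⟩ ⟨hx1', hx2'⟩
    refine ⟨fun y => ?_, ?_⟩
    · rw [polar_add_left, hx1 y, hx1' y, add_zero]
    · rw [eval_add, hx2, hx2', hx1 x', add_zero, add_zero]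
  smul_mem' := by
    rintro a x ⟨hx1, hx2⟩
    refine ⟨fun y => ?_, ?_⟩
    · rw [polar_smul_left, hx1 y, mul_zero]
    · rw [eval_smul, hx2, mul_zero]

/-- The quasilinear index (defect) `i_d` of a quadratic form. -/
noncomputable def defectIndex (c : ι → ι → R) : ℕ :=
  Module.finrank R (defectSubmodule c)

/-- The total isotropy index `i_t`: the dimension of a maximal totally isotropic
subspace. -/
noncomputable def totalIndex (c : ι → ι → R) : ℕ :=
  sSup {m | ∃ W : Submodule R (ι → R), (∀ x ∈ W, eval c x = 0) ∧ Module.finrank R W = m}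

/-- The Witt index `i_W = i_t - i_d`. -/
noncomputable def wittIndex (c : ι → ι → R) : ℕ := totalIndex c - defectIndex c

variable {F : Type u} [Field F]

/-- The homogeneous quadratic polynomial `φ(X_1, …, X_n)` attached to a quadratic form. -/
noncomputable def poly (c : ι → ι → F) : MvPolynomial ι F :=
  ∑ i, ∑ j, MvPolynomial.C (c i j) * (MvPolynomial.X i * MvPolynomial.X j)

/-- The canonical map from `F` to the total fraction ring of `A/(f)`; when `f` is
irreducible, the target is the function field `F(f)`. -/
noncomputable def ffHom {A : Type*} [CommRing A] (σ : F →+* A) (f : A) :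
    F →+* FractionRing (A ⧸ Ideal.span {f}) :=
  (algebraMap (A ⧸ Ideal.span {f}) (FractionRing (A ⧸ Ideal.span {f}))).comp
    ((Ideal.Quotient.mk (Ideal.span {f})).comp σ)

/-- The canonical map from `R` into (the total fraction ring of) `R[X_i : i ∈ κ]`;
for a field this is the inclusion into the rational function field `F(X_i : i ∈ κ)`. -/
noncomputable def ratHom (κ : Type) (R : Type*) [CommRing R] :
    R →+* FractionRing (MvPolynomial κ R) :=
  (algebraMap (MvPolynomial κ R) (FractionRing (MvPolynomial κ R))).comp MvPolynomial.C

/-- The canonical map from `F` into the rational function field `F(X)`. -/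
noncomputable def ratHom1 (F : Type u) [Field F] : F →+* FractionRing (Polynomial F) :=
  (algebraMap (Polynomial F) (FractionRing (Polynomial F))).comp Polynomial.C

/-- `φ_{F(ψ)}` is isotropic, where `F(ψ)` is the function field of the quadratic form `ψ`.
When the polynomial of `ψ` is irreducible this is the quotient field of `F[X]/(ψ(X))`;
otherwise (`ψ ≅ ⟨a⟩`, `ψ ≅ ℍ`, or degenerate defective cases) `F(ψ)` is a purely
transcendental extension of `F`, over which isotropy is equivalent to isotropy over `F`. -/
def IsotropicOverFunField (c : ι → ι → F) (d : κ → κ → F) : Prop :=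
  (Irreducible (poly d) → IsIsotropic (map (ffHom MvPolynomial.C (poly d)) c)) ∧
  (¬ Irreducible (poly d) → IsIsotropic c)

/-- Stable birational equivalence of (nondefective) quadratic forms:
`φ_{F(ψ)}` and `ψ_{F(φ)}` are both isotropic. -/
def StbEquiv (c : ι → ι → F) (d : κ → κ → F) : Prop :=
  IsotropicOverFunField c d ∧ IsotropicOverFunField d c

/-- The leading coefficient of a multivariate polynomial with respect to the
lexicographic ordering on monomials. -/
noncomputable def lexLC {l : ℕ} {F : Type*} [CommSemiring F] (f : MvPolynomial (Fin l) F) : F :=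
  if h : f = 0 then 0
  else f.coeff (ofLex ((f.support.image (toLex : (Fin l →₀ ℕ) → Lex (Fin l →₀ ℕ))).max'
    (Finset.Nonempty.image (MvPolynomial.support_nonempty.mpr h) _)))

/-- The coefficient matrix of the tensor product `π ⊗ φ` of the bilinear Pfister form
`π = ⟨⟨a 1, …, a n⟩⟩_b` with the quadratic form `c` (with respect to the standard basis,
`π ⊗ φ ≅ ⊥_{S ⊆ {1,…,n}} (∏_{i ∈ S} a i) φ`). -/
def pfisterMul {n : ℕ} (a : Fin n → R) (c : ι → ι → R) :
    ((Fin n → Bool) × ι) → ((Fin n → Bool) × ι) → R :=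
  fun p q =>
    if p.1 = q.1 then (∏ i, if p.1 i then a i else 1) * c p.2 q.2 else 0


lemma map_eval (σ : R →+* S) (c : ι → ι → R) (g : ι → R) :
    eval (map σ c) (σ ∘ g) = σ (eval c g) := by
  simp only [eval, map, map_sum, map_mul, Function.comp]

set_option maxHeartbeats 4000000 in
set_option synthInstance.maxHeartbeats 1000000 in
/-- Let `φ` be a quadratic form over a field `F` of characteristic 2,
`f ∈ F[X₁,…,X_l]` irreducible, and suppose there is `a ∈ F^*` with
`a·f ∈ ⟨D^*_{F(X₁,…,X_l)}(φ)⟩`.  Then `φ_{F(f)}` is isotropic. -/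
theorem stmt5 {F : Type u} [Field F] [CharP F 2] {ι : Type} [Fintype ι] {l : ℕ}
    (c : ι → ι → F) (f : MvPolynomial (Fin l) F) (hf : Irreducible f)
    (a : F) (ha : a ≠ 0)
    (hmem : algebraMap (MvPolynomial (Fin l) F) (FractionRing (MvPolynomial (Fin l) F))
        (MvPolynomial.C a * f) ∈ genGroup (map (ratHom (Fin l) F) c)) :
    IsIsotropic (map (ffHom MvPolynomial.C f) c) := by
  classical
  by_contra hiso
  have hfp : Prime f := (UniqueFactorizationMonoid.irreducible_iff_prime).mp hf
  haveI hprime : (Ideal.span {f} : Ideal (MvPolynomial (Fin l) F)).IsPrime :=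
    (Ideal.span_singleton_prime hfp.ne_zero).mpr hfp
  haveI : IsDomain ((MvPolynomial (Fin l) F) ⧸ Ideal.span {f}) := Ideal.Quotient.isDomain _
  set cA : ι → ι → (MvPolynomial (Fin l) F) := fun i j => MvPolynomial.C (c i j) with hcA
  have hmapc : map (ratHom (Fin l) F) c = map (algebraMap (MvPolynomial (Fin l) F) (FractionRing (MvPolynomial (Fin l) F))) cA := rfl
  have hinj : Function.Injective (algebraMap (MvPolynomial (Fin l) F) (FractionRing (MvPolynomial (Fin l) F))) := IsFractionRing.injective (MvPolynomial (Fin l) F) (FractionRing (MvPolynomial (Fin l) F))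
  have hfin : ∀ {x : (MvPolynomial (Fin l) F)}, x ≠ 0 → FiniteMultiplicity f x := fun hx =>
    FiniteMultiplicity.of_not_isUnit hfp.not_isUnit hx
  set μ : (MvPolynomial (Fin l) F) → ℕ := fun x => multiplicity f x with hμ
  have hμmul : ∀ {x y : (MvPolynomial (Fin l) F)}, x ≠ 0 → y ≠ 0 → μ (x * y) = μ x + μ y := by
    intro x y hx hy
    exact multiplicity_mul hfp (hfin (mul_ne_zero hx hy))
  set P : (FractionRing (MvPolynomial (Fin l) F)) → Prop := fun z => ∃ g h : (MvPolynomial (Fin l) F), g ≠ 0 ∧ h ≠ 0 ∧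
      z * algebraMap (MvPolynomial (Fin l) F) (FractionRing (MvPolynomial (Fin l) F)) h = algebraMap (MvPolynomial (Fin l) F) (FractionRing (MvPolynomial (Fin l) F)) g ∧ Even (μ g + μ h) with hP
  -- Step 1: every nonzero represented value satisfies `P`.
  have hrep : ∀ z ∈ reps (map (ratHom (Fin l) F) c), P z := by
    rintro z ⟨hz0, x, hx⟩
    rw [hmapc] at hx
    obtain ⟨b, hb⟩ :=
      IsLocalization.exist_integer_multiples_of_finite (nonZeroDivisors (MvPolynomial (Fin l) F)) x
    have hb' : ∀ i, ∃ g : (MvPolynomial (Fin l) F), algebraMap (MvPolynomial (Fin l) F) (FractionRing (MvPolynomial (Fin l) F)) g = (b : (MvPolynomial (Fin l) F)) • x i := fun i => hb i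
    choose g hg using hb'
    have hbne : (b : (MvPolynomial (Fin l) F)) ≠ 0 := nonZeroDivisors.coe_ne_zero b
    set hbar := algebraMap (MvPolynomial (Fin l) F) (FractionRing (MvPolynomial (Fin l) F)) (b : (MvPolynomial (Fin l) F)) with hhbar
    have hbarne : hbar ≠ 0 := fun h0 => hbne (hinj (by rw [map_zero]; exact h0))
    have hcomp : (algebraMap (MvPolynomial (Fin l) F) (FractionRing (MvPolynomial (Fin l) F))) ∘ g = hbar • x := by
      funext i
      simp only [Function.comp, Pi.smul_apply, smul_eq_mul]
      rw [hg i, Algebra.smul_def]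
    have key : algebraMap (MvPolynomial (Fin l) F) (FractionRing (MvPolynomial (Fin l) F)) (eval cA g) = hbar ^ 2 * z := by
      rw [← map_eval (algebraMap (MvPolynomial (Fin l) F) (FractionRing (MvPolynomial (Fin l) F))) cA g, hcomp, eval_smul, hx]
    have hG0 : eval cA g ≠ 0 := by
      intro h0
      apply hz0
      have : hbar ^ 2 * z = 0 := by rw [← key, h0, map_zero]
      rcases mul_eq_zero.mp this with h | h
      · exact absurd h (pow_ne_zero 2 hbarne)
      · exact h
    -- extract the maximal power of f dividing all the g i
    have hgex : ∃ i, g i ≠ 0 := by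
      by_contra hall
      push_neg at hall
      apply hG0
      simp only [eval]
      refine Finset.sum_eq_zero fun i _ => Finset.sum_eq_zero fun j _ => ?_
      rw [hall i]; ring
    set T : Finset ι := Finset.univ.filter (fun i => g i ≠ 0) with hT
    have hTne : T.Nonempty := by
      obtain ⟨i, hi⟩ := hgex
      exact ⟨i, by simp [hT, hi]⟩
    obtain ⟨i₀, hi₀T, hi₀min⟩ := T.exists_min_image (fun i => μ (g i)) hTne
    have hgi₀ : g i₀ ≠ 0 := by simpa [hT] using hi₀T
    set m := μ (g i₀) with hm
    have hdvd : ∀ i, f ^ m ∣ g i := by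
      intro i
      by_cases hgi : g i = 0
      · rw [hgi]; exact dvd_zero _
      · have : m ≤ multiplicity f (g i) := hi₀min i (by simp [hT, hgi])
        exact pow_dvd_of_le_multiplicity this
    choose g' hg' using fun i => (hdvd i)
    have hgfun : g = (f ^ m) • g' := by
      funext i; rw [hg' i]; rfl
    set e' := eval cA g' with he'
    have hGe : eval cA g = (f ^ m) ^ 2 * e' := by rw [hgfun, eval_smul]
    have he'0 : e' ≠ 0 := by
      intro h0; apply hG0; rw [hGe, h0, mul_zero]
    have hndvd₀ : ¬ f ∣ g' i₀ := by
      rintro ⟨w, hw⟩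
      have : f ^ (m + 1) ∣ g i₀ := ⟨w, by rw [hg' i₀, hw, pow_succ]; ring⟩
      exact (hfin hgi₀).not_pow_dvd_of_multiplicity_lt (Nat.lt_succ_self m) this
    -- f does not divide e', else φ would be isotropic over F(f)
    have hnde : ¬ f ∣ e' := by
      · intro hdvde
        apply hiso
        have hmapf : map (ffHom MvPolynomial.C f) c =
            map ((algebraMap ((MvPolynomial (Fin l) F) ⧸ Ideal.span {f})
                (FractionRing ((MvPolynomial (Fin l) F) ⧸ Ideal.span {f}))).comp
              (Ideal.Quotient.mk (Ideal.span {f}))) cA := rfl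
        refine ⟨((algebraMap ((MvPolynomial (Fin l) F) ⧸ Ideal.span {f})
                (FractionRing ((MvPolynomial (Fin l) F) ⧸ Ideal.span {f}))).comp
              (Ideal.Quotient.mk (Ideal.span {f}))) ∘ g', ?_, ?_⟩
        · intro h0
          have h1 : ((algebraMap ((MvPolynomial (Fin l) F) ⧸ Ideal.span {f})
                (FractionRing ((MvPolynomial (Fin l) F) ⧸ Ideal.span {f}))).comp
              (Ideal.Quotient.mk (Ideal.span {f}))) (g' i₀) = 0 := congrFun h0 i₀
          have h2 : Ideal.Quotient.mk (Ideal.span {f}) (g' i₀) = 0 :=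
            IsFractionRing.injective ((MvPolynomial (Fin l) F) ⧸ Ideal.span {f})
              (FractionRing ((MvPolynomial (Fin l) F) ⧸ Ideal.span {f}))
              (by simpa using h1)
          exact hndvd₀ (Ideal.mem_span_singleton.mp (Ideal.Quotient.eq_zero_iff_mem.mp h2))
        · rw [hmapf, map_eval]
          have h3 : Ideal.Quotient.mk (Ideal.span {f}) e' = 0 :=
            Ideal.Quotient.eq_zero_iff_mem.mpr (Ideal.mem_span_singleton.mpr hdvde)
          rw [RingHom.comp_apply, ← he', h3, map_zero]
    have hμe' : μ e' = 0 := multiplicity_eq_zero.mpr hnde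
    have hμG : μ (eval cA g) = 2 * m := by
      rw [hGe, hμmul (pow_ne_zero _ (pow_ne_zero _ hfp.ne_zero)) he'0, hμe', add_zero,
        ← pow_mul, hμ]
      simpa [Nat.mul_comm] using multiplicity_pow_self hfp.ne_zero hfp.not_isUnit (m * 2)
    refine ⟨eval cA g, (b : (MvPolynomial (Fin l) F)) ^ 2, hG0, pow_ne_zero 2 hbne, ?_, ?_⟩
    · rw [map_pow, ← hhbar, key]; ring
    · have hμb2 : μ ((b : (MvPolynomial (Fin l) F)) ^ 2) = 2 * μ (b : (MvPolynomial (Fin l) F)) := by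
        rw [sq, hμmul hbne hbne]; ring
      rw [hμG, hμb2]
      exact ⟨m + μ (b : (MvPolynomial (Fin l) F)), by ring⟩
  -- Step 2: `P` is preserved by the generated subgroup.
  have hmem' : algebraMap (MvPolynomial (Fin l) F) (FractionRing (MvPolynomial (Fin l) F)) (MvPolynomial.C a * f) ∈
      Submonoid.closure (reps (map (ratHom (Fin l) F) c) ∪
        Inv.inv '' reps (map (ratHom (Fin l) F) c)) := hmem
  have hPmem : P (algebraMap (MvPolynomial (Fin l) F) (FractionRing (MvPolynomial (Fin l) F)) (MvPolynomial.C a * f)) := by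
    refine Submonoid.closure_induction (motive := fun z _ => P z) ?_ ?_ ?_ hmem'
    · rintro z (hz | ⟨w, hw, rfl⟩)
      · exact hrep z hz
      · obtain ⟨g, h, hg, hh, he, hev⟩ := hrep w hw
        have hw0 : w ≠ 0 := hw.1
        refine ⟨h, g, hh, hg, ?_, by rwa [Nat.add_comm]⟩
        rw [← he, inv_mul_cancel_left₀ hw0]
    · exact ⟨1, 1, one_ne_zero, one_ne_zero, by simp,
        by simp [hμ, multiplicity_eq_zero.mpr
          (fun hd => hfp.not_isUnit (isUnit_of_dvd_one hd))]⟩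
    · rintro z w _ _ ⟨g1, h1, hg1, hh1, he1, hev1⟩ ⟨g2, h2, hg2, hh2, he2, hev2⟩
      refine ⟨g1 * g2, h1 * h2, mul_ne_zero hg1 hg2, mul_ne_zero hh1 hh2, ?_, ?_⟩
      · rw [map_mul, map_mul,
          show z * w * (algebraMap (MvPolynomial (Fin l) F) (FractionRing (MvPolynomial (Fin l) F)) h1 * algebraMap (MvPolynomial (Fin l) F) (FractionRing (MvPolynomial (Fin l) F)) h2)
            = (z * algebraMap (MvPolynomial (Fin l) F) (FractionRing (MvPolynomial (Fin l) F)) h1) * (w * algebraMap (MvPolynomial (Fin l) F) (FractionRing (MvPolynomial (Fin l) F)) h2) by ring, he1, he2]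
      · rw [hμmul hg1 hg2, hμmul hh1 hh2]
        obtain ⟨r, hr⟩ := hev1
        obtain ⟨s, hs⟩ := hev2
        exact ⟨r + s, by omega⟩
  -- Step 3: contradiction since `μ (C a * f) = 1` is odd.
  obtain ⟨g, h, hg, hh, he, hev⟩ := hPmem
  have hCa : IsUnit (MvPolynomial.C a : (MvPolynomial (Fin l) F)) := ha.isUnit.map MvPolynomial.C
  have hCane : (MvPolynomial.C a : (MvPolynomial (Fin l) F)) ≠ 0 := fun h0 => by simp [h0] at hCa
  have hgeq : MvPolynomial.C a * f * h = g := by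
    apply hinj
    rw [map_mul, he]
  have hμg : μ g = 1 + μ h := by
    rw [← hgeq, hμmul (mul_ne_zero hCane hfp.ne_zero) hh,
      hμmul hCane hfp.ne_zero,
      show μ (MvPolynomial.C a) = 0 from multiplicity_eq_zero.mpr
        (fun hd => hfp.not_isUnit (isUnit_of_dvd_unit hd hCa)),
      show μ f = 1 from multiplicity_self]
  rw [hμg] at hev
  obtain ⟨r, hr⟩ := hev
  omega

end QF2
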